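/- The sum of the multiplicities of all projective roots in ℝP¹ of a nonzero real polynomial p with respect to a degree bound d ≥ deg(p) equals d minus the number (with multiplicity) of non-real complex roots of p; in particular, if p splits over ℝ, this sum equals d. -/

import Mathlib

open scoped Classical

theorem aux_filter_real (p : Polynomial ℝ) (hp : p ≠ 0) :
    ((p.map (algebraMap ℝ ℂ)).roots.filter fun z => z.im = 0) =
      p.roots.map (algebraMap ℝ ℂ) := by
  have hinj : Function.Injective (algebraMap ℝ ℂ) := (algebraMap ℝ ℂ).injective
  ext z
  rw [Multiset.count_filter]
  by_cases hz : z.im = 0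
  · rw [if_pos hz]
    have hz' : z = algebraMap ℝ ℂ z.re := by
      apply Complex.ext <;> simp [hz]
    rw [hz', Multiset.count_map_eq_count' _ _ hinj, Polynomial.count_roots,
      Polynomial.count_roots, Polynomial.eq_rootMultiplicity_map hinj]
  · rw [if_neg hz]
    symm
    rw [Multiset.count_eq_zero]
    intro hmem
    obtain ⟨x, _, hx⟩ := Multiset.mem_map.mp hmem
    apply hz
    rw [← hx]
    simp

/-- The sum of the multiplicities of all projective roots in `ℝP¹` of a nonzero real
polynomial `p` with respect to a degree bound `d ≥ deg p` (the real roots contribute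
their usual multiplicities, the point at infinity contributes `d - deg p`) equals `d`
minus the number, with multiplicity, of non-real complex roots of `p`; in particular,
if `p` splits over `ℝ`, this sum equals `d`. -/
theorem stmt7 (p : Polynomial ℝ) (hp : p ≠ 0) (d : ℕ) (hd : p.natDegree ≤ d) :
    (Multiset.card p.roots + (d - p.natDegree) =
      d - Multiset.card (((p.map (algebraMap ℝ ℂ)).roots).filter fun z => z.im ≠ 0)) ∧
    (Polynomial.Splits (p.map (RingHom.id ℝ)) →
      Multiset.card p.roots + (d - p.natDegree) = d) := by
  have htot : p.natDegree = Multiset.card (p.map (algebraMap ℝ ℂ)).roots :=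
    (by rw [← Polynomial.natDegree_map (algebraMap ℝ ℂ)]; exact (IsAlgClosed.splits _).natDegree_eq_card_roots)
  have hsplit : (p.map (algebraMap ℝ ℂ)).roots.filter (fun z => z.im = 0) +
      (p.map (algebraMap ℝ ℂ)).roots.filter (fun z => ¬ z.im = 0) =
      (p.map (algebraMap ℝ ℂ)).roots := Multiset.filter_add_not _ _
  have hcard := congrArg Multiset.card hsplit
  rw [Multiset.card_add, aux_filter_real p hp, Multiset.card_map] at hcard
  have hle : Multiset.card p.roots ≤ p.natDegree := p.card_roots' 
  constructor
  · have : Multiset.card (((p.map (algebraMap ℝ ℂ)).roots).filter fun z => z.im ≠ 0) =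
        Multiset.card ((p.map (algebraMap ℝ ℂ)).roots.filter (fun z => ¬ z.im = 0)) := rfl
    rw [this]
    omega
  · intro hs
    have := (Polynomial.splits_iff_card_roots.mp hs)
    rw [Polynomial.map_id] at this
    omega
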